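/- Let s ≥ 1 be an integer and L_f, L_c > 0. Set k₀ := ⌊log₂ s⌋ + 1, and for integers k ≥ 1 define: α_k := 6/7 if k ≤ k₀ and α_k := 6/(k − k₀ + 7) if k > k₀; p_k := 1/7; T_k := 2^{k−1} if k ≤ k₀ and T_k := 2^{k₀−1} if k > k₀; ρ_k := 2^{k/2} if k ≤ k₀ and ρ_k := 3√s·(k − k₀ + 7)/16 if k > k₀; γ_k := 1/(8(L_f + ρ_k·L_c)·α_k); 𝓛_k := γ_k/α_k + (T_k − 1)·γ_k(α_k + p_k)/α_k; and 𝓡_k := (γ_k/α_k)(1 − α_k) + (T_k − 1)·γ_k·p_k/α_k. Then for every k ≥ 1: 𝓛_k·(1 − 2(ρ_{k+1} − ρ_k)/ρ_{k+1}) ≥ 𝓡_{k+1}. -/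
import Mathlib

set_option maxHeartbeats 2000000

private lemma chain_aux (A B F D D' L R fact : ℝ) (hD : 0 < D) (hDD' : D ≤ D')
    (hB : 0 ≤ B) (hA0 : 0 ≤ A) (hF0 : 0 ≤ F)
    (hL : L = A / D) (hR : R = B / D')
    (hAF : B ≤ A * F) (hFf : F ≤ fact) :
    L * fact ≥ R := by
  have hD' : 0 < D' := lt_of_lt_of_le hD hDD'
  have h1 : R ≤ B / D := by rw [hR]; gcongr
  have h2 : B / D ≤ (A * F) / D := by gcongr
  have h3 : (A * F) / D = (A / D) * F := by ring
  have h4 : (A / D) * F ≤ (A / D) * fact :=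
    mul_le_mul_of_nonneg_left hFf (div_nonneg hA0 hD.le)
  rw [hL]; linarith

/-- Lemma on the stepsize bookkeeping (case (ii) parameters of Theorem 3.2): with
`k₀ = ⌊log₂ s⌋ + 1` and the explicitly given `α_k, p_k, T_k, ρ_k, γ_k`, the quantities
`𝓛_k = γ_k/α_k + (T_k−1)γ_k(α_k+p_k)/α_k` and
`𝓡_k = (γ_k/α_k)(1−α_k) + (T_k−1)γ_kp_k/α_k` satisfy
`𝓛_k·(1 − 2(ρ_{k+1}−ρ_k)/ρ_{k+1}) ≥ 𝓡_{k+1}` for every `k ≥ 1`. -/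
theorem stepsize_bookkeeping (s : ℕ) (hs : 1 ≤ s)
    (Lf Lc : ℝ) (hLf : 0 < Lf) (hLc : 0 < Lc)
    (k₀ : ℕ) (hk₀ : k₀ = ⌊Real.logb 2 s⌋₊ + 1)
    (α : ℕ → ℝ)
    (hα : ∀ k, 1 ≤ k → α k = if k ≤ k₀ then (6 : ℝ) / 7 else 6 / ((k : ℝ) - k₀ + 7))
    (p : ℕ → ℝ) (hp : ∀ k, 1 ≤ k → p k = (1 : ℝ) / 7)
    (T : ℕ → ℕ)
    (hT : ∀ k, 1 ≤ k → T k = if k ≤ k₀ then 2 ^ (k - 1) else 2 ^ (k₀ - 1))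
    (ρ : ℕ → ℝ)
    (hρ : ∀ k, 1 ≤ k → ρ k = if k ≤ k₀ then (2 : ℝ) ^ ((k : ℝ) / 2)
      else 3 * Real.sqrt s * ((k : ℝ) - k₀ + 7) / 16)
    (γ : ℕ → ℝ) (hγ : ∀ k, 1 ≤ k → γ k = 1 / (8 * (Lf + ρ k * Lc) * α k))
    (𝓛 : ℕ → ℝ)
    (h𝓛 : ∀ k, 1 ≤ k → 𝓛 k = γ k / α k + ((T k : ℝ) - 1) * γ k * (α k + p k) / α k)
    (𝓡 : ℕ → ℝ)
    (h𝓡 : ∀ k, 1 ≤ k →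
      𝓡 k = γ k / α k * (1 - α k) + ((T k : ℝ) - 1) * γ k * p k / α k) :
    ∀ k, 1 ≤ k → 𝓛 k * (1 - 2 * (ρ (k + 1) - ρ k) / ρ (k + 1)) ≥ 𝓡 (k + 1) := by
  intro k hk
  have hk₀1 : 1 ≤ k₀ := by omega
  have hs0 : (0:ℝ) < s := by exact_mod_cast hs
  have hlog0 : 0 ≤ Real.logb 2 s :=
    Real.logb_nonneg one_lt_two (by exact_mod_cast hs)
  have hfl : (⌊Real.logb 2 s⌋₊ : ℝ) ≤ Real.logb 2 s := Nat.floor_le hlog0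
  have hfu : Real.logb 2 s < ⌊Real.logb 2 s⌋₊ + 1 := Nat.lt_floor_add_one _
  have hsu : (s:ℝ) ≤ (2:ℝ) ^ (k₀:ℝ) := by
    have h1 : Real.logb 2 s ≤ (k₀:ℝ) := by rw [hk₀]; push_cast; linarith
    calc (s:ℝ) = 2 ^ Real.logb 2 s := (Real.rpow_logb two_pos (by norm_num) hs0).symm
    _ ≤ 2 ^ (k₀:ℝ) := Real.rpow_le_rpow_of_exponent_le one_le_two h1
  have hsl : (2:ℝ) ^ ((k₀:ℝ) - 1) ≤ s := by
    have h1 : ((k₀:ℝ) - 1) ≤ Real.logb 2 s := by rw [hk₀]; push_cast; linarith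
    calc (2:ℝ)^((k₀:ℝ)-1) ≤ 2 ^ Real.logb 2 s :=
        Real.rpow_le_rpow_of_exponent_le one_le_two h1
    _ = s := Real.rpow_logb two_pos (by norm_num) hs0
  obtain ⟨w, hw⟩ : ∃ w : ℝ, w = Real.sqrt s := ⟨_, rfl⟩
  have hwpos : 0 < w := hw ▸ Real.sqrt_pos.mpr hs0
  have hw2 : w * w = s := hw ▸ Real.mul_self_sqrt hs0.le
  by_cases hcaseA : k + 1 ≤ k₀
  · -- Case A : k + 1 ≤ k₀
    have hkk : k ≤ k₀ := by omega
    obtain ⟨c, hc⟩ : ∃ c : ℝ, c = (2:ℝ) ^ ((1:ℝ)/2) := ⟨_, rfl⟩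
    have hcpos : 0 < c := hc ▸ Real.rpow_pos_of_pos two_pos _
    have hc2 : c * c = 2 := by
      rw [hc, ← Real.rpow_add two_pos]; norm_num
    have hc1 : 1 ≤ c := by nlinarith
    have hρk : ρ k = (2:ℝ) ^ ((k:ℝ)/2) := by rw [hρ k hk, if_pos hkk]
    have hρpos : 0 < ρ k := by rw [hρk]; exact Real.rpow_pos_of_pos two_pos _
    have hρk1 : ρ (k+1) = ρ k * c := by
      rw [hρ (k+1) (by omega), if_pos hcaseA, hρk, hc, ← Real.rpow_add two_pos]
      push_cast
      congr 1
      ring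
    have hDpos : 0 < Lf + ρ k * Lc := by nlinarith
    have hD'pos : 0 < Lf + ρ (k+1) * Lc := by rw [hρk1]; nlinarith
    have hDD' : Lf + ρ k * Lc ≤ Lf + ρ (k+1) * Lc := by rw [hρk1]; nlinarith
    obtain ⟨t, ht⟩ : ∃ t : ℝ, t = (2:ℝ) ^ (k - 1) := ⟨_, rfl⟩
    have htpos : (0:ℝ) < t := by rw [ht]; positivity
    have ht2 : ((2:ℝ) ^ k) = 2 * t := by
      rw [ht, ← pow_succ']
      congr 1
      omega
    have hL : 𝓛 k = (49 * t / 288) / (Lf + ρ k * Lc) := by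
      rw [h𝓛 k hk, hγ k hk, hα k hk, hp k hk, hT k hk, if_pos hkk, if_pos hkk]
      push_cast
      rw [← ht]
      field_simp
      ring
    have hR : 𝓡 (k+1) = (7 * t / 144) / (Lf + ρ (k+1) * Lc) := by
      rw [h𝓡 (k+1) (by omega), hγ (k+1) (by omega), hα (k+1) (by omega),
        hp (k+1) (by omega), hT (k+1) (by omega), if_pos hcaseA, if_pos hcaseA]
      push_cast
      rw [ht2, eq_div_iff hD'pos.ne']
      field_simp
      ring
    have hfact : 1 - 2 * (ρ (k+1) - ρ k) / ρ (k+1) = c - 1 := by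
      rw [hρk1]
      have hne : ρ k * c ≠ 0 := (mul_pos hρpos hcpos).ne'
      have h5 : 2 * (ρ k * c - ρ k) / (ρ k * c) = 2 - c := by
        rw [div_eq_iff hne]
        linear_combination ρ k * hc2
      rw [h5]; ring
    have hc97 : (9:ℝ)/7 ≤ c := by nlinarith
    have key : 7 * t / 144 ≤ (49 * t / 288) * (c - 1) := by nlinarith
    exact chain_aux (49*t/288) (7*t/144) (c-1) (Lf + ρ k * Lc)
      (Lf + ρ (k+1) * Lc) _ _ _ hDpos hDD' (by linarith) (by linarith)
      (by linarith) hL hR key hfact.ge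
  · by_cases hcaseB : k ≤ k₀
    · -- Case B : k = k₀
      have hkeq : k = k₀ := by omega
      subst hkeq
      obtain ⟨r, hr⟩ : ∃ r : ℝ, r = (2:ℝ) ^ ((k:ℝ)/2) := ⟨_, rfl⟩
      have hrpos : 0 < r := hr ▸ Real.rpow_pos_of_pos two_pos _
      have hr2 : r * r = (2:ℝ) ^ (k:ℝ) := by
        rw [hr, ← Real.rpow_add two_pos]; congr 1; ring
      have h2k : (2:ℝ) ^ ((k:ℝ) - 1) = 2 ^ (k:ℝ) / 2 := by
        rw [Real.rpow_sub two_pos, Real.rpow_one]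
      have hwr : w ≤ r := by nlinarith
      have hrw : r ≤ 3/2 * w := by nlinarith
      have hρk : ρ k = r := by rw [hρ k hk, if_pos le_rfl, hr]
      have hρk1 : ρ (k+1) = 3/2 * w := by
        rw [hρ (k+1) (by omega), if_neg (by omega), ← hw]
        push_cast
        ring
      have hDpos : 0 < Lf + ρ k * Lc := by rw [hρk]; nlinarith
      have hD'pos : 0 < Lf + ρ (k+1) * Lc := by rw [hρk1]; nlinarith
      have hDD' : Lf + ρ k * Lc ≤ Lf + ρ (k+1) * Lc := by
        rw [hρk, hρk1]; nlinarith
      obtain ⟨t, ht⟩ : ∃ t : ℝ, t = (2:ℝ) ^ (k - 1) := ⟨_, rfl⟩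
      have ht1 : (1:ℝ) ≤ t := by
        rw [ht]; exact one_le_pow₀ one_le_two
      have hL : 𝓛 k = (49 * t / 288) / (Lf + ρ k * Lc) := by
        rw [h𝓛 k hk, hγ k hk, hα k hk, hp k hk, hT k hk, if_pos le_rfl,
          if_pos le_rfl]
        push_cast
        rw [← ht]
        field_simp
        ring
      have hsimp8 : ((k+1:ℕ):ℝ) - (k:ℝ) + 7 = 8 := by push_cast; ring
      have hR : 𝓡 (k+1) = (1/18 + 2*(t-1)/63) / (Lf + ρ (k+1) * Lc) := by
        rw [h𝓡 (k+1) (by omega), hγ (k+1) (by omega), hα (k+1) (by omega),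
          hp (k+1) (by omega), hT (k+1) (by omega), if_neg (by omega),
          if_neg (by omega), hsimp8]
        push_cast
        rw [← ht, eq_div_iff hD'pos.ne']
        field_simp
        ring
      have hfact : (1:ℝ)/3 ≤ 1 - 2 * (ρ (k+1) - ρ k) / ρ (k+1) := by
        rw [hρk, hρk1]
        have h5 : 2 * (3/2*w - r) / (3/2*w) ≤ 2/3 := by
          rw [div_le_iff₀ (by positivity)]
          linarith
        linarith
      have key : 1/18 + 2*(t-1)/63 ≤ (49 * t / 288) * (1/3) := by linarith
      exact chain_aux (49*t/288) (1/18 + 2*(t-1)/63) (1/3) (Lf + ρ k * Lc)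
        (Lf + ρ (k+1) * Lc) _ _ _ hDpos hDD' (by linarith) (by linarith)
        (by norm_num) hL hR key hfact
    · -- Case C : k₀ < k
      obtain ⟨x, hx⟩ : ∃ x : ℝ, x = (k:ℝ) - (k₀:ℝ) := ⟨_, rfl⟩
      have hx1 : (1:ℝ) ≤ x := by
        have : (k₀:ℝ) + 1 ≤ (k:ℝ) := by exact_mod_cast (by omega : k₀ + 1 ≤ k)
        rw [hx]; linarith
      have hx7 : (k:ℝ) - (k₀:ℝ) + 7 = x + 7 := by rw [hx]
      have hx8 : ((k+1:ℕ):ℝ) - (k₀:ℝ) + 7 = x + 8 := by rw [hx]; push_cast; ring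
      have hρk : ρ k = 3*w*(x+7)/16 := by
        rw [hρ k hk, if_neg hcaseB, ← hw, hx7]
      have hρk1 : ρ (k+1) = 3*w*(x+8)/16 := by
        rw [hρ (k+1) (by omega), if_neg (by omega), ← hw, hx8]
      have h7pos : (0:ℝ) < x + 7 := by linarith
      have h8pos' : (0:ℝ) < x + 8 := by linarith
      have hDpos : 0 < Lf + ρ k * Lc := by
        rw [hρk]; nlinarith [mul_pos (mul_pos hwpos h7pos) hLc]
      have hD'pos : 0 < Lf + ρ (k+1) * Lc := by
        rw [hρk1]; nlinarith [mul_pos (mul_pos hwpos h8pos') hLc]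
      have hDD' : Lf + ρ k * Lc ≤ Lf + ρ (k+1) * Lc := by
        rw [hρk, hρk1]; nlinarith [mul_pos hwpos hLc]
      obtain ⟨t, ht⟩ : ∃ t : ℝ, t = (2:ℝ) ^ (k₀ - 1) := ⟨_, rfl⟩
      have ht1 : (1:ℝ) ≤ t := by
        rw [ht]; exact one_le_pow₀ one_le_two
      have hx7ne : x + 7 ≠ 0 := by intro h; linarith [hx1]
      have hx8ne : x + 8 ≠ 0 := by intro h; linarith [hx1]
      have hx8pos : (0:ℝ) < x + 8 := by linarith
      have ht0 : 0 ≤ t - 1 := by linarith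
      have hL : 𝓛 k = (((x+7)^2 + (t-1)*(x+7)*(x+49)/7)/288) /
          (Lf + ρ k * Lc) := by
        rw [h𝓛 k hk, hγ k hk, hα k hk, hp k hk, hT k hk, if_neg hcaseB,
          if_neg hcaseB, hx7]
        push_cast
        rw [← ht, eq_div_iff hDpos.ne']
        field_simp
        ring
      have hR : 𝓡 (k+1) = (((x+8)*(x+2) + (t-1)*(x+8)^2/7)/288) /
          (Lf + ρ (k+1) * Lc) := by
        rw [h𝓡 (k+1) (by omega), hγ (k+1) (by omega), hα (k+1) (by omega),
          hp (k+1) (by omega), hT (k+1) (by omega), if_neg (by omega),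
          if_neg (by omega), hx8]
        push_cast
        rw [← ht, eq_div_iff hD'pos.ne']
        field_simp
        ring
      have hfact : 1 - 2 * (ρ (k+1) - ρ k) / ρ (k+1) = (x+6)/(x+8) := by
        rw [hρk, hρk1]
        field_simp
        ring
      have h2 : (0:ℝ) ≤ (x+6)*(x+7)*(x+49) - (x+8)^3 := by nlinarith [sq_nonneg x]
      have key : ((x+8)*(x+2) + (t-1)*(x+8)^2/7)/288 ≤
          (((x+7)^2 + (t-1)*(x+7)*(x+49)/7)/288) * ((x+6)/(x+8)) := by
        rw [← mul_div_assoc, le_div_iff₀ hx8pos]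
        nlinarith [mul_nonneg ht0 h2, sq_nonneg x, hx1, ht1]
      have hA0 : (0:ℝ) ≤ ((x+7)^2 + (t-1)*(x+7)*(x+49)/7)/288 := by
        have h3 : 0 ≤ (t-1)*(x+7)*(x+49) :=
          mul_nonneg (mul_nonneg ht0 (by linarith)) (by linarith)
        nlinarith [sq_nonneg (x+7)]
      have hB0 : (0:ℝ) ≤ ((x+8)*(x+2) + (t-1)*(x+8)^2/7)/288 := by
        have h3 : 0 ≤ (t-1)*(x+8)^2 := mul_nonneg ht0 (sq_nonneg _)
        nlinarith [mul_nonneg (by linarith : (0:ℝ) ≤ x+8) (by linarith : (0:ℝ) ≤ x+2)]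
      have hF0 : (0:ℝ) ≤ (x+6)/(x+8) := div_nonneg (by linarith) (by linarith)
      exact chain_aux _ _ ((x+6)/(x+8)) (Lf + ρ k * Lc)
        (Lf + ρ (k+1) * Lc) _ _ _ hDpos hDD' hB0 hA0 hF0 hL hR key hfact.ge
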